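/- For every binary cubic form π with disc(π) ≠ 0, there exists an invertible real linear change of variables φ such that π∘φ(x,y) = x(x² − 3y²) if disc(π) > 0, and π∘φ(x,y) = x(x² + 3y²) if disc(π) < 0. -/

import Mathlib

/-- the discriminant of the binary cubic form ax³ + bx²y + cxy² + dy³ -/
def disc3 (a b c d : ℝ) : ℝ :=
  b ^ 2 * c ^ 2 - 4 * a * c ^ 3 - 4 * b ^ 3 * d + 18 * a * b * c * d - 27 * a ^ 2 * d ^ 2

/-- evaluation of the binary cubic form ax³ + bx²y + cxy² + dy³ -/
def cubic (a b c d x y : ℝ) : ℝ :=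
  a * x ^ 3 + b * x ^ 2 * y + c * x * y ^ 2 + d * y ^ 3

lemma cube_root (v : ℝ) : ∃ u : ℝ, u ^ 3 = v := by
  rcases le_or_gt 0 v with hv | hv
  · exact ⟨v ^ ((3:ℝ)⁻¹), by
      have := Real.rpow_inv_natCast_pow hv (n := 3) (by norm_num)
      simpa using this⟩
  · obtain ⟨u, hu⟩ : ∃ u : ℝ, u ^ 3 = -v :=
      ⟨(-v) ^ ((3:ℝ)⁻¹), by
        have := Real.rpow_inv_natCast_pow (by linarith : (0:ℝ) ≤ -v) (n := 3) (by norm_num)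
        simpa using this⟩
    exact ⟨-u, by rw [show (-u)^3 = -(u^3) by ring, hu, neg_neg]⟩

lemma exists_root3 (P Q : ℝ) : ∃ r : ℝ, r ^ 3 + P * r + Q = 0 := by
  set g : ℝ → ℝ := fun t => t ^ 3 + P * t + Q with hg
  set M : ℝ := 1 + |P| + |Q| with hM
  have hPa : -|P| ≤ P := neg_abs_le P
  have hPb : P ≤ |P| := le_abs_self P
  have hQa : -|Q| ≤ Q := neg_abs_le Q
  have hQb : Q ≤ |Q| := le_abs_self Q
  have hP0 : 0 ≤ |P| := abs_nonneg P
  have hQ0 : 0 ≤ |Q| := abs_nonneg Q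
  have hM1 : 1 ≤ M := by simp [hM]; linarith
  have h1 : g (-M) ≤ 0 := by
    simp only [hg]
    nlinarith [sq_nonneg M, sq_nonneg (M-1)]
  have h2 : 0 ≤ g M := by
    simp only [hg]
    nlinarith [sq_nonneg M, sq_nonneg (M-1)]
  have hc : ContinuousOn g (Set.Icc (-M) M) := by
    apply Continuous.continuousOn; continuity
  have := intermediate_value_Icc (by linarith : -M ≤ M) hc
  have h0 : (0:ℝ) ∈ Set.Icc (g (-M)) (g M) := ⟨h1, h2⟩
  obtain ⟨r, _, hr⟩ := this h0
  exact ⟨r, hr⟩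

/-- `(a,b,c,d)` transforms to `(a',b',c',d')` under some invertible linear change of
variables, and the discriminants differ by a positive square factor. -/
def Eqv (a b c d a' b' c' d' : ℝ) : Prop :=
  (∃ p q r s : ℝ, p * s - q * r ≠ 0 ∧ ∀ x y : ℝ,
      cubic a b c d (p * x + q * y) (r * x + s * y) = cubic a' b' c' d' x y) ∧
  ∃ k : ℝ, k ≠ 0 ∧ disc3 a' b' c' d' = k ^ 2 * disc3 a b c d

set_option maxHeartbeats 1000000 in
lemma Eqv.mk (a b c d p q r s : ℝ) (h : p * s - q * r ≠ 0) :
    Eqv a b c d (a*p^3 + b*p^2*r + c*p*r^2 + d*r^3)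
        (3*a*p^2*q + b*(p^2*s+2*p*q*r) + c*(2*p*r*s + q*r^2) + 3*d*r^2*s)
        (3*a*p*q^2 + b*(2*p*q*s + q^2*r) + c*(p*s^2 + 2*q*r*s) + 3*d*r*s^2)
        (a*q^3 + b*q^2*s + c*q*s^2 + d*s^3) := by
  refine ⟨⟨p, q, r, s, h, fun x y => by simp only [cubic]; ring⟩,
    (p*s - q*r)^3, pow_ne_zero _ h, by simp only [disc3]; ring⟩

lemma Eqv.congr {a b c d A B C D A' B' C' D' : ℝ} (h : Eqv a b c d A B C D)
    (hA : A = A') (hB : B = B') (hC : C = C') (hD : D = D') :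
    Eqv a b c d A' B' C' D' := by subst hA hB hC hD; exact h

lemma Eqv.trans {a b c d a' b' c' d' a'' b'' c'' d'' : ℝ}
    (h1 : Eqv a b c d a' b' c' d') (h2 : Eqv a' b' c' d' a'' b'' c'' d'') :
    Eqv a b c d a'' b'' c'' d'' := by
  obtain ⟨⟨p, q, r, s, hdet, heq⟩, k, hk, hd⟩ := h1
  obtain ⟨⟨p', q', r', s', hdet', heq'⟩, k', hk', hd'⟩ := h2
  refine ⟨⟨p*p'+q*r', p*q'+q*s', r*p'+s*r', r*q'+s*s', ?_, ?_⟩,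
    k * k', mul_ne_zero hk hk', by rw [hd', hd]; ring⟩
  · have e : (p*p'+q*r')*(r*q'+s*s') - (p*q'+q*s')*(r*p'+s*r')
        = (p*s - q*r) * (p'*s' - q'*r') := by ring
    rw [e]; exact mul_ne_zero hdet hdet'
  · intro x y
    have h3 := heq (p'*x+q'*y) (r'*x+s'*y)
    have h4 := heq' x y
    rw [← h4, ← h3]
    simp only [cubic]; ring

set_option maxHeartbeats 1000000 in
theorem key (a b c d : ℝ) (h : disc3 a b c d ≠ 0) :
    Eqv a b c d 1 0 (if 0 < disc3 a b c d then (-3:ℝ) else 3) 0 := by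
  -- Step 1: make leading coefficient nonzero
  obtain ⟨t, ht⟩ : ∃ t : ℝ, a + b*t + c*t^2 + d*t^3 ≠ 0 := by
    by_contra hh
    push_neg at hh
    have h0 := hh 0; have h1 := hh 1; have hm := hh (-1); have h2 := hh 2
    norm_num at h0 h1 hm h2
    have ha : a = 0 := by linarith
    have hcc : c = 0 := by linarith
    have hdd : d = 0 := by linarith
    have hb : b = 0 := by linarith
    exact h (by simp [disc3, ha, hb, hcc, hdd])
  obtain ⟨a1, ha1⟩ : ∃ x : ℝ, x = a + b*t + c*t^2 + d*t^3 := ⟨_, rfl⟩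
  obtain ⟨b1, hb1⟩ : ∃ x : ℝ, x = b + 2*c*t + 3*d*t^2 := ⟨_, rfl⟩
  obtain ⟨c1, hc1⟩ : ∃ x : ℝ, x = c + 3*d*t := ⟨_, rfl⟩
  rw [← ha1] at ht
  have E1 : Eqv a b c d a1 b1 c1 d :=
    (Eqv.mk a b c d 1 0 t 1 (by norm_num)).congr (by rw [ha1]; ring) (by rw [hb1]; ring)
      (by rw [hc1]; ring) (by ring)
  -- Step 2: normalize leading coefficient to 1
  obtain ⟨u, hu⟩ := cube_root (1 / a1)
  have hu0 : u ≠ 0 := by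
    intro h0
    exact one_div_ne_zero ht (by rw [← hu, h0]; ring)
  have hau : a1 * u^3 = 1 := by rw [hu]; field_simp
  have E2 : Eqv a1 b1 c1 d 1 (b1*u^2) (c1*u) d :=
    (Eqv.mk a1 b1 c1 d u 0 0 1 (by simpa using hu0)).congr (by linear_combination hau)
      (by ring) (by ring) (by ring)
  -- Step 3: depress
  obtain ⟨P, hP⟩ : ∃ x : ℝ, x = c1*u - (b1*u^2)^2/3 := ⟨_, rfl⟩
  obtain ⟨Q, hQ⟩ : ∃ x : ℝ, x = d - (b1*u^2)*(c1*u)/3 + 2*(b1*u^2)^3/27 := ⟨_, rfl⟩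
  have E3 : Eqv 1 (b1*u^2) (c1*u) d 1 0 P Q :=
    (Eqv.mk 1 (b1*u^2) (c1*u) d 1 (-(b1*u^2)/3) 0 1 (by norm_num)).congr (by ring)
      (by ring) (by rw [hP]; ring) (by rw [hQ]; ring)
  have EA : Eqv a b c d 1 0 P Q := E1.trans (E2.trans E3)
  clear ha1 hb1 hc1 hP hQ hu hau E1 E2 E3 ht hu0
  -- Step 4: factor out a real root
  obtain ⟨r, hr⟩ := exists_root3 P Q
  have E4 : Eqv 1 0 P Q 1 (3*r) (3*r^2+P) 0 :=
    (Eqv.mk 1 0 P Q 1 r 0 1 (by norm_num)).congr (by ring) (by ring) (by ring)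
      (by linear_combination hr)
  obtain ⟨F, hFdef⟩ : ∃ x : ℝ, x = 3*r^2 + P := ⟨_, rfl⟩
  rw [← hFdef] at E4
  have EB : Eqv a b c d 1 (3*r) F 0 := EA.trans E4
  have hF : F ≠ 0 := by
    obtain ⟨k2, hk2, hd2⟩ := EB.2
    intro h0
    refine mul_ne_zero (pow_ne_zero 2 hk2) h ?_
    rw [← hd2, h0]
    simp [disc3]
  -- Step 5: kill the cross term
  obtain ⟨α, hα⟩ : ∃ x : ℝ, x = -3*r/(2*F) := ⟨_, rfl⟩
  obtain ⟨E, hEdef⟩ : ∃ x : ℝ, x = 1 + 3*r*α + F*α^2 := ⟨_, rfl⟩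
  have E5 : Eqv 1 (3*r) F 0 E 0 F 0 :=
    (Eqv.mk 1 (3*r) F 0 1 0 α 1 (by norm_num)).congr (by rw [hEdef]; ring)
      (by rw [hα]; field_simp; ring) (by ring) (by ring)
  have EC : Eqv a b c d E 0 F 0 := EB.trans E5
  clear E4 E5 EA EB hr hα hEdef hFdef
  -- sign analysis
  obtain ⟨k3, hk3, hd3⟩ := EC.2
  have hEF : -4*E*F^3 = k3^2 * disc3 a b c d := by
    rw [← hd3]; simp only [disc3]; ring
  have hE : E ≠ 0 := by
    intro h0
    exact mul_ne_zero (pow_ne_zero 2 hk3) h (by rw [← hEF, h0]; ring)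
  have hF2 : (0:ℝ) < F^2 := lt_of_le_of_ne (sq_nonneg F) (Ne.symm (pow_ne_zero 2 hF))
  have hk3sq : (0:ℝ) < k3^2 := lt_of_le_of_ne (sq_nonneg k3) (Ne.symm (pow_ne_zero 2 hk3))
  set c' := if 0 < disc3 a b c d then (-3:ℝ) else 3 with hc'
  have hcEF : 0 < c' * (E*F) := by
    have heEF : E*F = (4*E*F^3)/(4*F^2) := by field_simp
    rcases lt_trichotomy (disc3 a b c d) 0 with hlt | heq0 | hgt
    · have h1 : -4*E*F^3 < 0 := by rw [hEF]; exact mul_neg_of_pos_of_neg hk3sq hlt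
      have h2 : 0 < E*F := by rw [heEF]; exact div_pos (by linarith) (by linarith)
      rw [hc', if_neg (by linarith)]
      linarith
    · exact absurd heq0 h
    · have h1 : 0 < -4*E*F^3 := by rw [hEF]; exact mul_pos hk3sq hgt
      have h2 : E*F < 0 := by rw [heEF]; exact div_neg_of_neg_of_pos (by linarith) (by linarith)
      rw [hc', if_pos hgt]
      nlinarith
  -- Step 6: final scaling
  obtain ⟨v, hv⟩ := cube_root (1 / E)
  have hv0 : v ≠ 0 := by
    intro h0
    exact one_div_ne_zero hE (by rw [← hv, h0]; ring)
  have hEv : 0 < E * v := by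
    have he1 : E*v*v^2 = 1 := by rw [show E*v*v^2 = E*v^3 by ring, hv]; field_simp
    nlinarith [sq_nonneg v]
  have hFv : F*v ≠ 0 := mul_ne_zero hF hv0
  have hpos : 0 < c' / (F*v) := by
    have hden : (0:ℝ) < E^2 * (F*v)^2 := by
      apply mul_pos
      · exact lt_of_le_of_ne (sq_nonneg E) (Ne.symm (pow_ne_zero 2 hE))
      · exact lt_of_le_of_ne (sq_nonneg (F*v)) (Ne.symm (pow_ne_zero 2 hFv))
    have e1 : c' / (F*v) = (c' * (E*F)) * (E*v) / (E^2 * (F*v)^2) := by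
      field_simp
    rw [e1]
    exact div_pos (mul_pos hcEF hEv) hden
  obtain ⟨μ, hμ⟩ : ∃ x : ℝ, x = Real.sqrt (c'/(F*v)) := ⟨_, rfl⟩
  have hμ2 : μ^2 = c'/(F*v) := by rw [hμ]; exact Real.sq_sqrt hpos.le
  have hμ0 : μ ≠ 0 := by
    intro h0
    rw [h0] at hμ2
    rw [← hμ2] at hpos
    norm_num at hpos
  have E6 : Eqv E 0 F 0 1 0 c' 0 :=
    (Eqv.mk E 0 F 0 v 0 0 μ (by simpa using mul_ne_zero hv0 hμ0)).congr
      (by rw [hv]; field_simp; ring) (by ring) (by rw [hμ2]; field_simp; ring) (by ring)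
  exact EC.trans E6
/-- every binary cubic form with nonzero discriminant is equivalent, under an
invertible real linear change of variables, to x(x² − 3y²) if disc > 0 and to x(x² + 3y²)
if disc < 0. -/
theorem stmt4 (a b c d : ℝ) (h : disc3 a b c d ≠ 0) :
    ∃ φ : Matrix (Fin 2) (Fin 2) ℝ, φ.det ≠ 0 ∧
      ((0 < disc3 a b c d → ∀ x y : ℝ,
          cubic a b c d (φ 0 0 * x + φ 0 1 * y) (φ 1 0 * x + φ 1 1 * y)
            = x * (x ^ 2 - 3 * y ^ 2)) ∧
       (disc3 a b c d < 0 → ∀ x y : ℝ,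
          cubic a b c d (φ 0 0 * x + φ 0 1 * y) (φ 1 0 * x + φ 1 1 * y)
            = x * (x ^ 2 + 3 * y ^ 2))) := by
  obtain ⟨⟨p, q, r, s, hdet, heq⟩, -⟩ := key a b c d h
  refine ⟨!![p, q; r, s], ?_, ?_, ?_⟩
  · rw [Matrix.det_fin_two_of]; exact hdet
  · intro hpos x y
    have hthis := heq x y
    rw [if_pos hpos] at hthis
    rw [show (!![p, q; r, s] : Matrix (Fin 2) (Fin 2) ℝ) 0 0 = p from rfl,
      show (!![p, q; r, s] : Matrix (Fin 2) (Fin 2) ℝ) 0 1 = q from rfl,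
      show (!![p, q; r, s] : Matrix (Fin 2) (Fin 2) ℝ) 1 0 = r from rfl,
      show (!![p, q; r, s] : Matrix (Fin 2) (Fin 2) ℝ) 1 1 = s from rfl, hthis]
    simp only [cubic]; ring
  · intro hneg x y
    have hthis := heq x y
    rw [if_neg (by linarith)] at hthis
    rw [show (!![p, q; r, s] : Matrix (Fin 2) (Fin 2) ℝ) 0 0 = p from rfl,
      show (!![p, q; r, s] : Matrix (Fin 2) (Fin 2) ℝ) 0 1 = q from rfl,
      show (!![p, q; r, s] : Matrix (Fin 2) (Fin 2) ℝ) 1 0 = r from rfl,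
      show (!![p, q; r, s] : Matrix (Fin 2) (Fin 2) ℝ) 1 1 = s from rfl, hthis]
    simp only [cubic]; ring
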